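/- Let S be a finite nonempty set, r, r̄ : S → ℝ, and let p, p̄ : S → S → ℝ be row-stochastic matrices. Suppose ρ ∈ ℝ and λ : S → ℝ satisfy the Poisson equation for (r,p): for all s, ρ + λ(s) = r(s) + Σ_{s'} p(s,s')·λ(s'); suppose span(λ) ≤ D; and suppose for every s, |r(s) − r̄(s)| < ε and Σ_{s'} |p(s,s') − p̄(s,s')| < ε, where ε > 0 and D ≥ 0. Let (Ω, ℱ, P) be a probability space with a filtration (ℱ_n)_{n∈ℕ} and an adapted process X : ℕ → Ω → S satisfying the Markov property with respect to p̄: for every n and every f : S → ℝ, E[f(X_{n+1}) | ℱ_n] = Σ_{s'} p̄(X_n, s')·f(s') almost surely. Then for every ℓ ≥ 1 and every θ ∈ (0,1), with probability at least 1 − θ: ℓ·ρ − Σ_{τ=1}^{ℓ} r̄(X_τ) < ℓ·ε·(D + 1) + D·√(2·ℓ·log(1/θ)) + D. -/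

import Mathlib

open Finset MeasureTheory


section Aux

lemma finHoeff {S : Type*} [Fintype S] (w d : S → ℝ) (D t : ℝ)
    (hw0 : ∀ s, 0 ≤ w s) (hw1 : ∑ s, w s = 1)
    (hd : ∀ s, |d s| ≤ D) (hmean : ∑ s, w s * d s = 0) (hD : 0 < D) :
    ∑ s, w s * Real.exp (t * d s) ≤ Real.exp (t ^ 2 * D ^ 2 / 2) := by
  have key : ∀ s, Real.exp (t * d s) ≤
      ((D + d s) / (2 * D)) * Real.exp (t * D) +
      ((D - d s) / (2 * D)) * Real.exp (-(t * D)) := by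
    intro s
    have h1 : -D ≤ d s := (abs_le.1 (hd s)).1
    have h2 : d s ≤ D := (abs_le.1 (hd s)).2
    have ha : 0 ≤ (D + d s) / (2 * D) := div_nonneg (by linarith) (by linarith)
    have hb : 0 ≤ (D - d s) / (2 * D) := div_nonneg (by linarith) (by linarith)
    have hab : (D + d s) / (2 * D) + (D - d s) / (2 * D) = 1 := by
      field_simp; ring
    have := convexOn_exp.2 (Set.mem_univ (t * D)) (Set.mem_univ (-(t * D))) ha hb hab
    simp only [smul_eq_mul] at this
    have harg : (D + d s) / (2 * D) * (t * D) + (D - d s) / (2 * D) * (-(t * D)) = t * d s := by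
      field_simp; ring
    rwa [harg] at this
  have hsa : ∑ s, w s * ((D + d s) / (2 * D)) = 1 / 2 := by
    simp_rw [← mul_div_assoc, ← Finset.sum_div, mul_add]
    rw [Finset.sum_add_distrib]
    simp_rw [mul_comm (w _) D]
    rw [← Finset.mul_sum, hw1, hmean]
    field_simp; ring
  have hsb : ∑ s, w s * ((D - d s) / (2 * D)) = 1 / 2 := by
    simp_rw [← mul_div_assoc, ← Finset.sum_div, mul_sub]
    rw [Finset.sum_sub_distrib]
    simp_rw [mul_comm (w _) D]
    rw [← Finset.mul_sum, hw1, hmean]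
    field_simp; ring
  calc ∑ s, w s * Real.exp (t * d s)
      ≤ ∑ s, w s * (((D + d s) / (2 * D)) * Real.exp (t * D) +
          ((D - d s) / (2 * D)) * Real.exp (-(t * D))) :=
        sum_le_sum fun s _ => mul_le_mul_of_nonneg_left (key s) (hw0 s)
    _ = Real.cosh (t * D) := by
        simp_rw [mul_add, ← mul_assoc]
        rw [Finset.sum_add_distrib, ← Finset.sum_mul, ← Finset.sum_mul, hsa, hsb,
          Real.cosh_eq]
        ring
    _ ≤ Real.exp ((t * D) ^ 2 / 2) := Real.cosh_le_exp_half_sq _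
    _ = Real.exp (t ^ 2 * D ^ 2 / 2) := by ring_nf

lemma measComp {S : Type*} [Fintype S] {Ω : Type*} {m : MeasurableSpace Ω}
    {Y : Ω → S} (h : ∀ s, MeasurableSet[m] {ω | Y ω = s}) (f : S → ℝ) :
    Measurable[m] fun ω => f (Y ω) := by
  classical
  have : (fun ω => f (Y ω)) = fun ω => ∑ s, if Y ω = s then f s else 0 := by
    funext ω; simp
  rw [this]
  exact Finset.measurable_sum _ fun s _ =>
    Measurable.ite (h s) measurable_const measurable_const

lemma bddComp {S : Type*} [Fintype S] {Ω : Type*} (Y : Ω → S) (f : S → ℝ) (ω : Ω) :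
    |f (Y ω)| ≤ ∑ s, |f s| :=
  Finset.single_le_sum (f := fun s => |f s|) (fun s _ => abs_nonneg _) (mem_univ _)

lemma intBdd {Ω : Type*} {m : MeasurableSpace Ω} (P : Measure Ω) [IsFiniteMeasure P]
    {F : Ω → ℝ} (hm : Measurable F) {C : ℝ} (hb : ∀ ω, |F ω| ≤ C) : Integrable F P :=
  ⟨hm.aestronglyMeasurable, HasFiniteIntegral.of_bounded (C := C)
    (ae_of_all _ fun ω => by rw [Real.norm_eq_abs]; exact hb ω)⟩

/-- Pull out an `ℱ n`-measurable bounded factor through the Markov property. -/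
lemma markov_pullout {S : Type*} [Fintype S] {Ω : Type*} {mΩ : MeasurableSpace Ω}
    (P : Measure Ω) [IsProbabilityMeasure P] (ℱ : Filtration ℕ mΩ) (X : ℕ → Ω → S)
    (pbar : S → S → ℝ)
    (hadapted : ∀ n s, MeasurableSet[ℱ n] {ω | X n ω = s})
    (hmarkov : ∀ n (f : S → ℝ),
      P[(fun ω => f (X (n + 1) ω))|ℱ n] =ᵐ[P] fun ω => ∑ s', pbar (X n ω) s' * f s')
    (n : ℕ) (F : Ω → ℝ) (hF : Measurable[ℱ n] F) {C : ℝ} (hFb : ∀ ω, |F ω| ≤ C)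
    (f : S → ℝ) :
    ∫ ω, F ω * f (X (n + 1) ω) ∂P = ∫ ω, F ω * ∑ s', pbar (X n ω) s' * f s' ∂P := by
  set Y : Ω → ℝ := fun ω => f (X (n + 1) ω) with hYdef
  have hFm : Measurable F := hF.mono (ℱ.le n) le_rfl
  have hYm : Measurable Y := (measComp (hadapted (n + 1)) f).mono (ℱ.le (n + 1)) le_rfl
  have hYint : Integrable Y P := intBdd P hYm (fun ω => bddComp _ f ω)
  have hFYint : Integrable (F * Y) P := by
    refine intBdd P (hFm.mul hYm) (C := C * ∑ s, |f s|) fun ω => ?_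
    rw [Pi.mul_apply, abs_mul]
    exact mul_le_mul (hFb ω) (bddComp _ f ω) (abs_nonneg _)
      ((abs_nonneg (F ω)).trans (hFb ω))
  have h2 : P[F * Y|ℱ n] =ᵐ[P] F * P[Y|ℱ n] :=
    condExp_mul_of_stronglyMeasurable_left hF.stronglyMeasurable hFYint hYint
  calc ∫ ω, F ω * Y ω ∂P = ∫ ω, (P[F * Y|ℱ n]) ω ∂P :=
        (integral_condExp (ℱ.le n) (f := F * Y)).symm
    _ = ∫ ω, F ω * (P[Y|ℱ n]) ω ∂P := integral_congr_ae h2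
    _ = ∫ ω, F ω * ∑ s', pbar (X n ω) s' * f s' ∂P := by
        refine integral_congr_ae ?_
        filter_upwards [hmarkov n f] with ω hω
        rw [hω]

end Aux

/-- Lemma 1 of the appendix (fixed-policy form): if the optimal policy of an MDP with
Poisson solution `(ρ, λ)`, `span λ ≤ D`, is run for `ℓ` steps on an `ε`-approximation
`(r̄, p̄)` over the same state space (the trajectory `X` being a Markov chain with
transition matrix `p̄`), then with probability at least `1 - θ` the collected mean rewards
fall short of `ℓρ` by less than `ℓε(D+1) + D √(2 ℓ log(1/θ)) + D`. -/
theorem approximate_model_reward_shortfall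
    {S : Type*} [Fintype S] [Nonempty S]
    (r rbar : S → ℝ) (p pbar : S → S → ℝ)
    (hp0 : ∀ s s', 0 ≤ p s s') (hp1 : ∀ s, ∑ s', p s s' = 1)
    (hpbar0 : ∀ s s', 0 ≤ pbar s s') (hpbar1 : ∀ s, ∑ s', pbar s s' = 1)
    (ρ D ε : ℝ) (lam : S → ℝ)
    (hPoisson : ∀ s, ρ + lam s = r s + ∑ s', p s s' * lam s')
    (hD : 0 ≤ D)
    (hspan : univ.sup' univ_nonempty lam - univ.inf' univ_nonempty lam ≤ D)
    (hε : 0 < ε)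
    (hr : ∀ s, |r s - rbar s| < ε)
    (hpdiff : ∀ s, ∑ s', |p s s' - pbar s s'| < ε)
    {Ω : Type*} {mΩ : MeasurableSpace Ω} (P : Measure Ω) [IsProbabilityMeasure P]
    (ℱ : Filtration ℕ mΩ) (X : ℕ → Ω → S)
    (hadapted : ∀ n s, MeasurableSet[ℱ n] {ω | X n ω = s})
    (hmarkov : ∀ n (f : S → ℝ),
      P[(fun ω => f (X (n + 1) ω))|ℱ n] =ᵐ[P] fun ω => ∑ s', pbar (X n ω) s' * f s')
    (ℓ : ℕ) (hℓ : 1 ≤ ℓ) (θ : ℝ) (hθ0 : 0 < θ) (hθ1 : θ < 1) :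
    ENNReal.ofReal (1 - θ) ≤
      P {ω | (ℓ : ℝ) * ρ - ∑ τ ∈ Icc 1 ℓ, rbar (X τ ω) <
        (ℓ : ℝ) * ε * (D + 1) + D * Real.sqrt (2 * ℓ * Real.log (1 / θ)) + D} := by
  classical
  set c := univ.inf' univ_nonempty lam with hc
  set lt : S → ℝ := fun s => lam s - c with hltdef
  have hlt0 : ∀ s, 0 ≤ lt s := fun s => sub_nonneg.2 (inf'_le _ (mem_univ s))
  have hltD : ∀ s, lt s ≤ D := fun s => by
    have h1 : lam s ≤ univ.sup' univ_nonempty lam := le_sup' _ (mem_univ s)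
    simp only [hltdef]; linarith
  set g : S → ℝ := fun s => ∑ s', pbar s s' * lt s' with hgdef
  have hg0 : ∀ s, 0 ≤ g s := fun s =>
    sum_nonneg fun s' _ => mul_nonneg (hpbar0 s s') (hlt0 s')
  have hgD : ∀ s, g s ≤ D := fun s => by
    calc ∑ s', pbar s s' * lt s' ≤ ∑ s', pbar s s' * D :=
          sum_le_sum fun s' _ => mul_le_mul_of_nonneg_left (hltD s') (hpbar0 s s')
      _ = D := by rw [← Finset.sum_mul, hpbar1 s, one_mul]
  set M : ℕ → Ω → ℝ := fun n ω => ∑ τ ∈ Icc 1 n, (g (X τ ω) - lt (X (τ + 1) ω)) with hMdef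
  -- per-state Poisson identity
  have hstep : ∀ u : S, ρ - rbar u = (r u - rbar u)
      + (∑ s', (p u s' - pbar u s') * lt s') + (g u - lt u) := by
    intro u
    have h1 := hPoisson u
    have h2 : ∑ s', p u s' * lam s' = (∑ s', p u s' * lt s') + c := by
      have e : ∀ s' : S, p u s' * lam s' = p u s' * lt s' + p u s' * c := by
        intro s'; simp only [hltdef]; ring
      rw [Finset.sum_congr rfl fun s' _ => e s', Finset.sum_add_distrib,
        ← Finset.sum_mul, hp1 u, one_mul]
    have h3 : ∑ s', p u s' * lt s' = (∑ s', (p u s' - pbar u s') * lt s') + g u := by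
      simp only [hgdef]
      rw [← Finset.sum_add_distrib]
      exact Finset.sum_congr rfl fun s' _ => by ring
    have h4 : lam u = lt u + c := by simp [hltdef]
    linarith
  -- telescoping
  have htel : ∀ ω, ∀ n : ℕ, ∑ τ ∈ Icc 1 n, (lt (X (τ + 1) ω) - lt (X τ ω))
      = lt (X (n + 1) ω) - lt (X 1 ω) := by
    intro ω n
    induction n with
    | zero => simp
    | succ n ih =>
      rw [Finset.sum_Icc_succ_top (Nat.le_add_left 1 n), ih]
      ring
  -- decomposition
  have hdecomp : ∀ ω, (ℓ : ℝ) * ρ - ∑ τ ∈ Icc 1 ℓ, rbar (X τ ω) =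
      (∑ τ ∈ Icc 1 ℓ, (r (X τ ω) - rbar (X τ ω)))
      + (∑ τ ∈ Icc 1 ℓ, ∑ s', (p (X τ ω) s' - pbar (X τ ω) s') * lt s')
      + M ℓ ω + (lt (X (ℓ + 1) ω) - lt (X 1 ω)) := by
    intro ω
    have hcard : ((Icc 1 ℓ).card : ℝ) = (ℓ : ℝ) := by
      rw [Nat.card_Icc]; simp
    have h1 : (ℓ : ℝ) * ρ - ∑ τ ∈ Icc 1 ℓ, rbar (X τ ω)
        = ∑ τ ∈ Icc 1 ℓ, (ρ - rbar (X τ ω)) := by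
      rw [Finset.sum_sub_distrib, Finset.sum_const, nsmul_eq_mul, hcard]
    have h2 : ∀ τ ∈ Icc 1 ℓ, ρ - rbar (X τ ω) = (r (X τ ω) - rbar (X τ ω))
        + (∑ s', (p (X τ ω) s' - pbar (X τ ω) s') * lt s')
        + (g (X τ ω) - lt (X (τ + 1) ω)) + (lt (X (τ + 1) ω) - lt (X τ ω)) := by
      intro τ _
      have := hstep (X τ ω)
      linarith
    rw [h1, Finset.sum_congr rfl h2, Finset.sum_add_distrib, Finset.sum_add_distrib,
      Finset.sum_add_distrib, htel ω ℓ]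
  -- error bounds
  have hA : ∀ ω, ∑ τ ∈ Icc 1 ℓ, (r (X τ ω) - rbar (X τ ω)) < (ℓ : ℝ) * ε := by
    intro ω
    have hne : (Icc 1 ℓ).Nonempty := Finset.nonempty_Icc.2 hℓ
    calc ∑ τ ∈ Icc 1 ℓ, (r (X τ ω) - rbar (X τ ω)) < ∑ _τ ∈ Icc 1 ℓ, ε :=
          Finset.sum_lt_sum_of_nonempty hne fun τ _ =>
            lt_of_le_of_lt (le_abs_self _) (hr (X τ ω))
      _ = (ℓ : ℝ) * ε := by
          rw [Finset.sum_const, nsmul_eq_mul, Nat.card_Icc]; simp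
  have hB : ∀ ω, ∑ τ ∈ Icc 1 ℓ, ∑ s', (p (X τ ω) s' - pbar (X τ ω) s') * lt s'
      ≤ (ℓ : ℝ) * (ε * D) := by
    intro ω
    have hinner : ∀ u : S, ∑ s', (p u s' - pbar u s') * lt s' ≤ ε * D := by
      intro u
      calc ∑ s', (p u s' - pbar u s') * lt s' ≤ ∑ s', |p u s' - pbar u s'| * D := by
            refine sum_le_sum fun s' _ => ?_
            calc (p u s' - pbar u s') * lt s' ≤ |p u s' - pbar u s'| * |lt s'| := by
                  rw [← abs_mul]; exact le_abs_self _
              _ ≤ |p u s' - pbar u s'| * D := by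
                  refine mul_le_mul_of_nonneg_left ?_ (abs_nonneg _)
                  rw [abs_of_nonneg (hlt0 s')]; exact hltD s'
        _ = (∑ s', |p u s' - pbar u s'|) * D := by rw [Finset.sum_mul]
        _ ≤ ε * D := mul_le_mul_of_nonneg_right (hpdiff u).le hD
    calc ∑ τ ∈ Icc 1 ℓ, ∑ s', (p (X τ ω) s' - pbar (X τ ω) s') * lt s'
        ≤ ∑ _τ ∈ Icc 1 ℓ, ε * D := sum_le_sum fun τ _ => hinner (X τ ω)
      _ = (ℓ : ℝ) * (ε * D) := by
          rw [Finset.sum_const, nsmul_eq_mul, Nat.card_Icc]; simp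
  set t : ℝ := D * Real.sqrt (2 * ℓ * Real.log (1 / θ)) with htdef
  -- the subset reduction
  have hsub : {ω | M ℓ ω < t} ⊆ {ω | (ℓ : ℝ) * ρ - ∑ τ ∈ Icc 1 ℓ, rbar (X τ ω) <
      (ℓ : ℝ) * ε * (D + 1) + D * Real.sqrt (2 * ℓ * Real.log (1 / θ)) + D} := by
    intro ω hω
    simp only [Set.mem_setOf_eq] at hω ⊢
    have h1 := hdecomp ω
    have h2 := hA ω
    have h3 := hB ω
    have h4 : lt (X (ℓ + 1) ω) - lt (X 1 ω) ≤ D := by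
      linarith [hltD (X (ℓ + 1) ω), hlt0 (X 1 ω)]
    have h5 : (ℓ : ℝ) * ε * (D + 1) = (ℓ : ℝ) * ε + (ℓ : ℝ) * (ε * D) := by ring
    linarith
  -- measurability of M n and boundedness
  have hMmeas : ∀ n : ℕ, Measurable[ℱ (n + 1)] (M n) := by
    intro n
    refine Finset.measurable_sum _ fun τ hτ => ?_
    have hτ2 : τ ≤ n := (Finset.mem_Icc.1 hτ).2
    exact ((measComp (hadapted τ) g).mono (ℱ.mono (by omega)) le_rfl).sub
      ((measComp (hadapted (τ + 1)) lt).mono (ℱ.mono (by omega)) le_rfl)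
  have hMb : ∀ n : ℕ, ∀ ω, |M n ω| ≤ (n : ℝ) * D := by
    intro n ω
    calc |M n ω| ≤ ∑ τ ∈ Icc 1 n, |g (X τ ω) - lt (X (τ + 1) ω)| :=
          Finset.abs_sum_le_sum_abs _ _
      _ ≤ ∑ _τ ∈ Icc 1 n, D := sum_le_sum fun τ _ => abs_le.2
          ⟨by linarith [hg0 (X τ ω), hltD (X (τ + 1) ω)],
           by linarith [hgD (X τ ω), hlt0 (X (τ + 1) ω)]⟩
      _ = (n : ℝ) * D := by rw [Finset.sum_const, nsmul_eq_mul, Nat.card_Icc]; simp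
  rcases hD.eq_or_lt with hD0 | hDpos
  · -- degenerate case D = 0 : the event holds surely
    subst hD0
    have hzero : ∀ s, lt s = 0 := fun s => le_antisymm (hltD s) (hlt0 s)
    have hfull : ∀ ω, (ℓ : ℝ) * ρ - ∑ τ ∈ Icc 1 ℓ, rbar (X τ ω) <
        (ℓ : ℝ) * ε * (0 + 1) + 0 * Real.sqrt (2 * ℓ * Real.log (1 / θ)) + 0 := by
      intro ω
      have h1 := hdecomp ω
      have h2 := hA ω
      have h3 := hB ω
      have h5 := hMb ℓ ω
      have h6 : |M ℓ ω| ≤ 0 := by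
        calc |M ℓ ω| ≤ (ℓ : ℝ) * 0 := h5
          _ = 0 := by ring
      have h7 := abs_le.1 h6
      have h8 : 0 * Real.sqrt (2 * ℓ * Real.log (1 / θ)) = 0 := zero_mul _
      rw [hzero (X (ℓ + 1) ω), hzero (X 1 ω)] at h1
      nlinarith [h7.2]
    calc ENNReal.ofReal (1 - θ) ≤ 1 := ENNReal.ofReal_le_one.2 (by linarith)
      _ = P Set.univ := (measure_univ).symm
      _ ≤ _ := measure_mono fun ω _ => hfull ω
  -- main case D > 0
  suffices htail : ENNReal.ofReal (1 - θ) ≤ P {ω | M ℓ ω < t} from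
    le_trans htail (measure_mono hsub)
  have hL : 0 < Real.log (1 / θ) := Real.log_pos (one_lt_one_div hθ0 hθ1)
  have hℓR : (0 : ℝ) < (ℓ : ℝ) := by exact_mod_cast hℓ
  have harg : 0 < 2 * (ℓ : ℝ) * Real.log (1 / θ) := by positivity
  have ht0 : 0 < t := by
    rw [htdef]; exact mul_pos hDpos (Real.sqrt_pos.2 harg)
  set s0 : ℝ := t / ((ℓ : ℝ) * D ^ 2) with hs0def
  have hs0 : 0 < s0 := div_pos ht0 (by positivity)
  -- exponential moment bound by induction (Azuma's inequality, mgf part)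
  have hMGF : ∀ n : ℕ, ∫ ω, Real.exp (s0 * M n ω) ∂P
      ≤ Real.exp (s0 ^ 2 * D ^ 2 * n / 2) := by
    intro n
    induction n with
    | zero =>
      have : ∀ ω, Real.exp (s0 * M 0 ω) = 1 := by
        intro ω; simp [hMdef]
      rw [integral_congr_ae (ae_of_all _ this)]
      simp
    | succ n ih =>
      set F : Ω → ℝ := fun ω => Real.exp (s0 * (M n ω + g (X (n + 1) ω))) with hFdef
      set f : S → ℝ := fun s' => Real.exp (-(s0 * lt s')) with hfdef
      have hsplit : ∀ ω, Real.exp (s0 * M (n + 1) ω) = F ω * f (X (n + 2) ω) := by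
        intro ω
        have h1 : M (n + 1) ω = M n ω + (g (X (n + 1) ω) - lt (X (n + 2) ω)) := by
          simp only [hMdef]
          rw [Finset.sum_Icc_succ_top (Nat.le_add_left 1 n)]
        rw [h1, hFdef, hfdef, ← Real.exp_add]
        congr 1; ring
      have hFmeas : Measurable[ℱ (n + 1)] F := by
        apply Real.measurable_exp.comp
        exact ((hMmeas n).add (measComp (hadapted (n + 1)) g)).const_mul s0
      have hFb : ∀ ω, |F ω| ≤ Real.exp (s0 * ((n : ℝ) * D + D)) := by
        intro ω
        rw [abs_of_pos (Real.exp_pos _), Real.exp_le_exp]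
        refine mul_le_mul_of_nonneg_left ?_ hs0.le
        have := (abs_le.1 (hMb n ω)).2
        linarith [hgD (X (n + 1) ω)]
      -- pull-out step via the Markov property at time n+1
      have hpull := markov_pullout P ℱ X pbar hadapted hmarkov (n + 1) F hFmeas hFb f
      -- pointwise Hoeffding bound
      have hpt : ∀ ω, F ω * ∑ s', pbar (X (n + 1) ω) s' * f s'
          ≤ Real.exp (s0 * M n ω) * Real.exp (s0 ^ 2 * D ^ 2 / 2) := by
        intro ω
        set u := X (n + 1) ω with hu
        have hmean : ∑ s', pbar u s' * (g u - lt s') = 0 := by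
          simp_rw [mul_sub]
          rw [Finset.sum_sub_distrib, ← Finset.sum_mul, hpbar1 u, one_mul]
          simp only [hgdef]
          ring
        have hdb : ∀ s', |g u - lt s'| ≤ D := fun s' => abs_le.2
          ⟨by linarith [hg0 u, hltD s'], by linarith [hgD u, hlt0 s']⟩
        have key := finHoeff (pbar u) (fun s' => g u - lt s') D s0
          (hpbar0 u) (hpbar1 u) hdb hmean hDpos
        have hre : F ω * ∑ s', pbar u s' * f s'
            = Real.exp (s0 * M n ω) * ∑ s', pbar u s' * Real.exp (s0 * (g u - lt s')) := by
          rw [Finset.mul_sum, Finset.mul_sum]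
          refine Finset.sum_congr rfl fun s' _ => ?_
          rw [hFdef, hfdef]
          simp only
          rw [← mul_assoc, ← mul_assoc, mul_comm (Real.exp _) (pbar u s'),
            mul_comm (Real.exp (s0 * M n ω)) (pbar u s'), mul_assoc, mul_assoc,
            ← Real.exp_add, ← Real.exp_add]
          congr 2
          ring
        rw [hre]
        exact mul_le_mul_of_nonneg_left key (Real.exp_pos _).le
      -- assemble
      have hMnmeas : Measurable (fun ω => Real.exp (s0 * M n ω)) :=
        Real.measurable_exp.comp (((hMmeas n).mono (ℱ.le (n + 1)) le_rfl).const_mul s0)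
      have hint2 : Integrable (fun ω => Real.exp (s0 * M n ω)) P := by
        refine intBdd P hMnmeas (C := Real.exp (s0 * ((n : ℝ) * D))) fun ω => ?_
        rw [abs_of_pos (Real.exp_pos _), Real.exp_le_exp]
        exact mul_le_mul_of_nonneg_left (abs_le.1 (hMb n ω)).2 hs0.le
      have hint1 : Integrable (fun ω => F ω * ∑ s', pbar (X (n + 1) ω) s' * f s') P := by
        have hm1 : Measurable F := hFmeas.mono (ℱ.le (n + 1)) le_rfl
        have hm2 : Measurable (fun ω => ∑ s', pbar (X (n + 1) ω) s' * f s') :=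
          (measComp (hadapted (n + 1)) (fun u => ∑ s', pbar u s' * f s')).mono
            (ℱ.le (n + 1)) le_rfl
        refine intBdd P (hm1.mul hm2)
          (C := Real.exp (s0 * ((n : ℝ) * D + D)) * ∑ u, |∑ s', pbar u s' * f s'|)
          fun ω => ?_
        rw [abs_mul]
        exact mul_le_mul (hFb ω)
          (bddComp (X (n + 1)) (fun u => ∑ s', pbar u s' * f s') ω) (abs_nonneg _)
          (Real.exp_pos _).le
      calc ∫ ω, Real.exp (s0 * M (n + 1) ω) ∂P
          = ∫ ω, F ω * f (X (n + 2) ω) ∂P := integral_congr_ae (ae_of_all _ hsplit)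
        _ = ∫ ω, F ω * ∑ s', pbar (X (n + 1) ω) s' * f s' ∂P := hpull
        _ ≤ ∫ ω, Real.exp (s0 * M n ω) * Real.exp (s0 ^ 2 * D ^ 2 / 2) ∂P :=
            integral_mono hint1 (hint2.mul_const _) hpt
        _ = (∫ ω, Real.exp (s0 * M n ω) ∂P) * Real.exp (s0 ^ 2 * D ^ 2 / 2) :=
            integral_mul_const _ _
        _ ≤ Real.exp (s0 ^ 2 * D ^ 2 * n / 2) * Real.exp (s0 ^ 2 * D ^ 2 / 2) :=
            mul_le_mul_of_nonneg_right ih (Real.exp_pos _).le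
        _ = Real.exp (s0 ^ 2 * D ^ 2 * (n + 1 : ℕ) / 2) := by
            rw [← Real.exp_add]
            congr 1
            push_cast
            ring
  -- Chernoff bound
  have hMℓmeas : Measurable (M ℓ) := (hMmeas ℓ).mono (ℱ.le (ℓ + 1)) le_rfl
  have hintℓ : Integrable (fun ω => Real.exp (s0 * M ℓ ω)) P := by
    refine intBdd P (Real.measurable_exp.comp (hMℓmeas.const_mul s0))
      (C := Real.exp (s0 * ((ℓ : ℝ) * D))) fun ω => ?_
    rw [abs_of_pos (Real.exp_pos _), Real.exp_le_exp]
    exact mul_le_mul_of_nonneg_left (abs_le.1 (hMb ℓ ω)).2 hs0.le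
  have hsetEq : {ω | t ≤ M ℓ ω} = {ω | Real.exp (s0 * t) ≤ Real.exp (s0 * M ℓ ω)} := by
    ext ω
    simp only [Set.mem_setOf_eq, Real.exp_le_exp]
    exact (mul_le_mul_iff_right₀ hs0).symm
  have hmk := mul_meas_ge_le_integral_of_nonneg
    (ae_of_all P fun ω => (Real.exp_pos (s0 * M ℓ ω)).le) hintℓ (Real.exp (s0 * t))
  have hchern : (P {ω | t ≤ M ℓ ω}).toReal ≤ θ := by
    have h1 : Real.exp (s0 * t) * (P {ω | t ≤ M ℓ ω}).toReal
        ≤ Real.exp (s0 ^ 2 * D ^ 2 * ℓ / 2) := by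
      rw [hsetEq]
      exact le_trans hmk (hMGF ℓ)
    have h2 : (P {ω | t ≤ M ℓ ω}).toReal
        ≤ Real.exp (s0 ^ 2 * D ^ 2 * ℓ / 2) / Real.exp (s0 * t) := by
      rw [le_div_iff₀ (Real.exp_pos _)]
      linarith
    have ht2 : t ^ 2 = D ^ 2 * (2 * ℓ * Real.log (1 / θ)) := by
      rw [htdef, mul_pow, Real.sq_sqrt harg.le]
    have hkey : s0 ^ 2 * D ^ 2 * ℓ / 2 - s0 * t = -Real.log (1 / θ) := by
      rw [hs0def]
      have hD2 : D ^ 2 ≠ 0 := by positivity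
      have hℓ2 : (ℓ : ℝ) ≠ 0 := hℓR.ne'
      field_simp
      nlinarith [ht2]
    have h3 : Real.exp (s0 ^ 2 * D ^ 2 * ℓ / 2) / Real.exp (s0 * t) = θ := by
      rw [← Real.exp_sub, hkey, one_div, Real.log_inv, neg_neg, Real.exp_log hθ0]
    linarith
  have hAmeas : MeasurableSet {ω | t ≤ M ℓ ω} :=
    measurableSet_le measurable_const hMℓmeas
  have hPA : P {ω | t ≤ M ℓ ω} ≤ ENNReal.ofReal θ := by
    rw [← ENNReal.ofReal_toReal (measure_ne_top P {ω | t ≤ M ℓ ω})]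
    exact ENNReal.ofReal_le_ofReal hchern
  have hcompl : {ω | M ℓ ω < t} = {ω | t ≤ M ℓ ω}ᶜ := by
    ext ω; simp [not_le]
  calc ENNReal.ofReal (1 - θ) = 1 - ENNReal.ofReal θ := by
        rw [ENNReal.ofReal_sub _ hθ0.le, ENNReal.ofReal_one]
    _ ≤ 1 - P {ω | t ≤ M ℓ ω} := tsub_le_tsub_left hPA 1
    _ = P {ω | M ℓ ω < t} := by
        rw [hcompl, measure_compl hAmeas (measure_ne_top P _), measure_univ]
    _ ≤ P {ω | M ℓ ω < t} := le_rfl
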